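/- arXiv:1410.0064 — 2 statements merged into one kernel-verified Lean document; each statement's English description precedes it below -/
import Mathlib

section
/- Let Q(w) = a_0 + \sum_{i=1}^m a_i e^{\ell_i w} with real coefficients a_i, a_0 \neq 0, a_m \neq 0, and exponents 0 < \ell_1 \le \ell_2 \le \cdots \le \ell_{m-1} < \ell_m. Then there exists a constant C > 0, depending only on a_0, \ldots, a_m, \ell_1, and \ell_m - \ell_{m-1}, such that every complex zero w of Q satisfies -C < Re(w) < C. -/
open Finset

set_option maxHeartbeats 1000000 in
/-- Zeros of a poly-exponential have bounded real part, with a bound depending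
only on the coefficients, `ℓ 1`, and the gap `ℓ m - ℓ (m-1)`. -/
theorem stmt0 (m : ℕ) (hm : 1 ≤ m) (a : ℕ → ℝ) (ha0 : a 0 ≠ 0) (ham : a m ≠ 0)
    (L1 : ℝ) (hL1 : 0 < L1) (gap : ℝ) (hgap : 0 < gap) :
    ∃ C > (0 : ℝ), ∀ ℓ : ℕ → ℝ,
      (∀ i ∈ Finset.Icc 1 m, 0 < ℓ i) →
      (∀ i j, 1 ≤ i → i ≤ j → j ≤ m → ℓ i ≤ ℓ j) →
      ℓ (m - 1) < ℓ m →
      ℓ 1 = L1 → ℓ m - ℓ (m - 1) = gap →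
      ∀ w : ℂ,
        (a 0 : ℂ) + ∑ i ∈ Finset.Icc 1 m, (a i : ℂ) * Complex.exp ((ℓ i : ℂ) * w) = 0 →
        -C < w.re ∧ w.re < C := by
  obtain ⟨n, rfl⟩ : ∃ n, m = n + 1 := ⟨m - 1, (Nat.succ_pred_eq_of_pos hm).symm⟩
  set m := n + 1 with hmdef
  set S : ℝ := ∑ i ∈ Finset.range (m + 1), |a i| with hSdef
  have hS0 : |a 0| ≤ S := Finset.single_le_sum (fun i _ => abs_nonneg (a i)) (by simp [hmdef])
  have hSm : |a m| ≤ S := Finset.single_le_sum (fun i _ => abs_nonneg (a i)) (by simp)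
  have hSpos : 0 < S := lt_of_lt_of_le (abs_pos.mpr ha0) hS0
  set g : ℝ := min gap L1 with hgdef
  have hgpos : 0 < g := lt_min hgap hL1
  set A : ℝ := |Real.log (S / |a 0|) / L1| with hA
  set B : ℝ := |Real.log (S / |a m|) / g| with hB
  set C : ℝ := 1 + A + B with hC
  have hApos : 0 ≤ A := abs_nonneg _
  have hBpos : 0 ≤ B := abs_nonneg _
  have hCpos : 0 < C := by positivity
  refine ⟨C, hCpos, ?_⟩
  intro ℓ hpos hmono hlt hℓ1 hgapEq w hw
  have habs : ∀ i, ‖(a i : ℂ) * Complex.exp ((ℓ i : ℂ) * w)‖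
      = |a i| * Real.exp (ℓ i * w.re) := by
    intro i
    rw [norm_mul, Complex.norm_real, Real.norm_eq_abs, Complex.norm_exp, Complex.re_ofReal_mul]
  have hIccS : ∑ i ∈ Finset.Icc 1 m, |a i| ≤ S := by
    apply Finset.sum_le_sum_of_subset_of_nonneg
    · intro x hx
      simp only [Finset.mem_Icc] at hx
      simp only [Finset.mem_range]
      omega
    · intro i _ _; exact abs_nonneg _
  constructor
  · -- lower bound
    by_contra h
    push_neg at h  -- h : w.re ≤ -C
    have hwre : w.re ≤ 0 := h.trans (by linarith)
    have key : |a 0| ≤ S * Real.exp (L1 * w.re) := by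
      have heq : (a 0 : ℂ) = -∑ i ∈ Finset.Icc 1 m, (a i : ℂ) * Complex.exp ((ℓ i : ℂ) * w) := by
        linear_combination hw
      calc |a 0| = ‖(a 0 : ℂ)‖ := by rw [Complex.norm_real, Real.norm_eq_abs]
        _ = ‖∑ i ∈ Finset.Icc 1 m, (a i : ℂ) * Complex.exp ((ℓ i : ℂ) * w)‖ := by
            rw [heq, norm_neg]
        _ ≤ ∑ i ∈ Finset.Icc 1 m, ‖(a i : ℂ) * Complex.exp ((ℓ i : ℂ) * w)‖ :=
            norm_sum_le _ _
        _ = ∑ i ∈ Finset.Icc 1 m, |a i| * Real.exp (ℓ i * w.re) := by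
            exact Finset.sum_congr rfl fun i _ => habs i
        _ ≤ ∑ i ∈ Finset.Icc 1 m, |a i| * Real.exp (L1 * w.re) := by
            apply Finset.sum_le_sum
            intro i hi
            apply mul_le_mul_of_nonneg_left _ (abs_nonneg _)
            apply Real.exp_le_exp.mpr
            have hi' := Finset.mem_Icc.mp hi
            have : L1 ≤ ℓ i := hℓ1 ▸ hmono 1 i le_rfl hi'.1 hi'.2
            nlinarith
        _ = (∑ i ∈ Finset.Icc 1 m, |a i|) * Real.exp (L1 * w.re) := by
            rw [Finset.sum_mul]
        _ ≤ S * Real.exp (L1 * w.re) :=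
            mul_le_mul_of_nonneg_right hIccS (Real.exp_nonneg _)
    have hlogA : |Real.log (S / |a 0|)| = L1 * A := by
      rw [hA, abs_div, abs_of_pos hL1]
      field_simp
    have hlt2 : Real.exp (L1 * w.re) < |a 0| / S := by
      rw [← Real.exp_log (div_pos (abs_pos.mpr ha0) hSpos)]
      apply Real.exp_lt_exp.mpr
      have h1 : Real.log (|a 0| / S) = -Real.log (S / |a 0|) := by
        rw [← Real.log_inv]
        congr 1
        field_simp
      rw [h1]
      have h2 : Real.log (S / |a 0|) ≤ L1 * A := hlogA ▸ le_abs_self _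
      have h3 : L1 * w.re ≤ L1 * (-C) := mul_le_mul_of_nonneg_left h hL1.le
      have : L1 * (-C) = -L1 - L1 * A - L1 * B := by rw [hC]; ring
      nlinarith
    have : S * Real.exp (L1 * w.re) < |a 0| := by
      have := mul_lt_mul_of_pos_left hlt2 hSpos
      rwa [mul_div_cancel₀ _ hSpos.ne'] at this
    linarith
  · -- upper bound
    by_contra h
    push_neg at h  -- h : C ≤ w.re
    have hwre : 0 ≤ w.re := hCpos.le.trans h
    have hmm : m - 1 = n := by omega
    rw [hmm] at hlt hgapEq
    have hℓm : L1 ≤ ℓ m := hℓ1 ▸ hmono 1 m le_rfl (by omega) le_rfl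
    have hgle : g ≤ ℓ m := le_trans (le_trans (min_le_right _ _) hℓm) le_rfl
    have hsplit : ∑ i ∈ Finset.Icc 1 m, (a i : ℂ) * Complex.exp ((ℓ i : ℂ) * w)
        = (∑ i ∈ Finset.Icc 1 n, (a i : ℂ) * Complex.exp ((ℓ i : ℂ) * w))
          + (a m : ℂ) * Complex.exp ((ℓ m : ℂ) * w) := by
      rw [hmdef, Finset.sum_Icc_succ_top (by omega)]
    have key : |a m| * Real.exp (ℓ m * w.re) ≤ S * Real.exp ((ℓ m - g) * w.re) := by
      have heq : (a m : ℂ) * Complex.exp ((ℓ m : ℂ) * w)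
          = -((a 0 : ℂ) + ∑ i ∈ Finset.Icc 1 n, (a i : ℂ) * Complex.exp ((ℓ i : ℂ) * w)) := by
        rw [hsplit] at hw
        linear_combination hw
      have hE : ∀ i ∈ Finset.Icc 1 n, Real.exp (ℓ i * w.re) ≤ Real.exp ((ℓ m - g) * w.re) := by
        intro i hi
        have hi' := Finset.mem_Icc.mp hi
        have h1 : ℓ i ≤ ℓ n := hmono i n hi'.1 hi'.2 (by omega)
        have h2 : ℓ n = ℓ m - gap := by linarith
        have : ℓ i ≤ ℓ m - g := by
          have := min_le_left gap L1
          linarith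
        exact Real.exp_le_exp.mpr (by nlinarith)
      calc |a m| * Real.exp (ℓ m * w.re)
          = ‖(a m : ℂ) * Complex.exp ((ℓ m : ℂ) * w)‖ := (habs m).symm
        _ = ‖(a 0 : ℂ) + ∑ i ∈ Finset.Icc 1 n, (a i : ℂ) * Complex.exp ((ℓ i : ℂ) * w)‖ := by
            rw [heq, norm_neg]
        _ ≤ ‖(a 0 : ℂ)‖ + ‖∑ i ∈ Finset.Icc 1 n, (a i : ℂ) * Complex.exp ((ℓ i : ℂ) * w)‖ :=
            norm_add_le _ _
        _ ≤ |a 0| + ∑ i ∈ Finset.Icc 1 n, |a i| * Real.exp (ℓ i * w.re) := by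
            rw [Complex.norm_real, Real.norm_eq_abs]
            gcongr
            calc ‖∑ i ∈ Finset.Icc 1 n, (a i : ℂ) * Complex.exp ((ℓ i : ℂ) * w)‖
                ≤ ∑ i ∈ Finset.Icc 1 n, ‖(a i : ℂ) * Complex.exp ((ℓ i : ℂ) * w)‖ :=
                  norm_sum_le _ _
              _ = _ := Finset.sum_congr rfl fun i _ => habs i
        _ ≤ |a 0| * Real.exp ((ℓ m - g) * w.re)
              + ∑ i ∈ Finset.Icc 1 n, |a i| * Real.exp ((ℓ m - g) * w.re) := by
            apply add_le_add
            · have h1 : (1:ℝ) ≤ Real.exp ((ℓ m - g) * w.re) :=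
                Real.one_le_exp (by nlinarith)
              nlinarith [abs_nonneg (a 0)]
            · apply Finset.sum_le_sum
              intro i hi
              exact mul_le_mul_of_nonneg_left (hE i hi) (abs_nonneg _)
        _ = (|a 0| + ∑ i ∈ Finset.Icc 1 n, |a i|) * Real.exp ((ℓ m - g) * w.re) := by
            rw [add_mul, Finset.sum_mul]
        _ ≤ S * Real.exp ((ℓ m - g) * w.re) := by
            apply mul_le_mul_of_nonneg_right _ (Real.exp_nonneg _)
            have : (∑ i ∈ Finset.Icc 1 n, |a i|) + (|a 0| + |a m|)
                ≤ S := by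
              have : Finset.range (m+1) = insert 0 (insert m (Finset.Icc 1 n)) := by
                ext x
                simp only [Finset.mem_range, Finset.mem_insert, Finset.mem_Icc]
                omega
              rw [hSdef, this, Finset.sum_insert, Finset.sum_insert]
              · linarith
              · simp only [Finset.mem_insert, Finset.mem_Icc]; omega
              · simp only [Finset.mem_insert, Finset.mem_Icc]; omega
            linarith [abs_nonneg (a m)]
    have key2 : |a m| ≤ S * Real.exp (-g * w.re) := by
      have hEpos : 0 < Real.exp (ℓ m * w.re) := Real.exp_pos _
      have : (ℓ m - g) * w.re = (-g * w.re) + ℓ m * w.re := by ring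
      rw [this, Real.exp_add, ← mul_assoc] at key
      exact le_of_mul_le_mul_right key hEpos
    have hlogB : |Real.log (S / |a m|)| = g * B := by
      rw [hB, abs_div, abs_of_pos hgpos]
      field_simp
    have hlt2 : Real.exp (-g * w.re) < |a m| / S := by
      rw [← Real.exp_log (div_pos (abs_pos.mpr ham) hSpos)]
      apply Real.exp_lt_exp.mpr
      have h1 : Real.log (|a m| / S) = -Real.log (S / |a m|) := by
        rw [← Real.log_inv]; congr 1; field_simp
      rw [h1]
      have h2 : Real.log (S / |a m|) ≤ g * B := hlogB ▸ le_abs_self _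
      have h3 : g * C ≤ g * w.re := mul_le_mul_of_nonneg_left h hgpos.le
      have : g * C = g + g * A + g * B := by rw [hC]; ring
      nlinarith
    have : S * Real.exp (-g * w.re) < |a m| := by
      have := mul_lt_mul_of_pos_left hlt2 hSpos
      rwa [mul_div_cancel₀ _ hSpos.ne'] at this
    linarith
end

section
/- Let \Gamma be a finite directed graph with vertex set V and edge set E, let \ell : E \to \mathbb{N}_{\ge 1} assign positive integer lengths, let \Gamma_\ell be the graph obtained by subdividing each edge e into \ell(e) edges, let A_\ell be the adjacency matrix of \Gamma_\ell, and let A(t) \in M_{|V|}(\mathbb{Z}[t]) be defined by A(t)_{uv} = \sum_{e : u \to v} t^{\ell(e)}. Then for every nonzero \lambda \in \mathbb{C}, \lambda is an eigenvalue of A_\ell if and only if \det(I - A(\lambda^{-1})) = 0. -/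
open Finset

/-- Adjacency matrix of the subdivision `Γ_ℓ` of a finite directed multigraph:
vertices are the original vertices `V` together with, for each edge `e`, the
`ℓ e - 1` interior subdivision vertices. -/
noncomputable def subAdj {V E : Type} [Fintype V] [DecidableEq V] [Fintype E] [DecidableEq E]
    (s t : E → V) (ℓ : E → ℕ) :
    Matrix (V ⊕ (Σ e : E, Fin (ℓ e - 1))) (V ⊕ (Σ e : E, Fin (ℓ e - 1))) ℂ :=
  fun x y =>
    match x, y with
    | Sum.inl u, Sum.inl v =>
        ((Finset.univ.filter (fun e => ℓ e = 1 ∧ s e = u ∧ t e = v)).card : ℂ)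
    | Sum.inl u, Sum.inr ⟨e, j⟩ => if s e = u ∧ (j : ℕ) = 0 then 1 else 0
    | Sum.inr ⟨e, j⟩, Sum.inl v => if t e = v ∧ (j : ℕ) + 2 = ℓ e then 1 else 0
    | Sum.inr ⟨e, j⟩, Sum.inr ⟨e', j'⟩ =>
        if e = e' ∧ (j' : ℕ) = (j : ℕ) + 1 then 1 else 0

/-- McMullen's matrix `A(x)` with `A(x)_{uv} = ∑_{e : u → v} x ^ ℓ(e)`. -/
noncomputable def perronMat {V E : Type} [Fintype V] [DecidableEq V] [Fintype E] [DecidableEq E]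
    (s t : E → V) (ℓ : E → ℕ) (x : ℂ) : Matrix V V ℂ :=
  fun u v => ∑ e ∈ Finset.univ.filter (fun e => s e = u ∧ t e = v), x ^ (ℓ e)

section Helpers
variable {V E : Type} [Fintype V] [DecidableEq V] [Fintype E] [DecidableEq E]
  (s t : E → V) (ℓ : E → ℕ)

lemma fin_sum_ite {n k : ℕ} (g : Fin n → ℂ) :
    ∑ i : Fin n, (if (i : ℕ) = k then g i else 0) = if h : k < n then g ⟨k, h⟩ else 0 := by
  split_ifs with h
  · rw [Finset.sum_eq_single (⟨k, h⟩ : Fin n)]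
    · simp
    · intro i _ hi
      rw [if_neg]
      simpa [Fin.ext_iff] using hi
    · simp
  · apply Finset.sum_eq_zero
    intro i _
    rw [if_neg]
    exact fun hk => h (hk ▸ i.isLt)

lemma mulVec_inr (f : (V ⊕ (Σ e : E, Fin (ℓ e - 1))) → ℂ) (e : E) (j : Fin (ℓ e - 1)) :
    (subAdj s t ℓ).mulVec f (Sum.inr ⟨e, j⟩) =
      (if (j : ℕ) + 2 = ℓ e then f (Sum.inl (t e)) else 0) +
      (if h : (j : ℕ) + 1 < ℓ e - 1 then f (Sum.inr ⟨e, ⟨(j : ℕ) + 1, h⟩⟩) else 0) := by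
  simp only [Matrix.mulVec, dotProduct, Fintype.sum_sum_type, subAdj]
  congr 1
  · have key : ∀ v, (if t e = v ∧ (j : ℕ) + 2 = ℓ e then (1 : ℂ) else 0) * f (Sum.inl v)
        = if t e = v then (if (j : ℕ) + 2 = ℓ e then f (Sum.inl v) else 0) else 0 := by
      intro v
      by_cases h1 : t e = v <;> by_cases h2 : (j : ℕ) + 2 = ℓ e <;> simp [h1, h2]
    rw [Finset.sum_congr rfl (fun v _ => key v), Finset.sum_ite_eq]
    simp
  · rw [← Finset.univ_sigma_univ, Finset.sum_sigma]
    have key : ∀ e' : E, (∑ j' : Fin (ℓ e' - 1),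
        (if e = e' ∧ (j' : ℕ) = (j : ℕ) + 1 then (1 : ℂ) else 0) * f (Sum.inr ⟨e', j'⟩))
        = if e = e' then (∑ j' : Fin (ℓ e' - 1),
            if (j' : ℕ) = (j : ℕ) + 1 then f (Sum.inr ⟨e', j'⟩) else 0) else 0 := by
      intro e'
      by_cases h1 : e = e'
      · subst h1
        simp only [true_and, if_pos rfl]
        apply Finset.sum_congr rfl
        intro j' _
        by_cases h2 : (j' : ℕ) = (j : ℕ) + 1 <;> simp [h2]
      · simp [h1]
    rw [Finset.sum_congr rfl (fun e' _ => key e'), Finset.sum_ite_eq]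
    simp [fin_sum_ite]
end Helpers

section Helpers2
variable {V E : Type} [Fintype V] [DecidableEq V] [Fintype E] [DecidableEq E]
  (s t : E → V) (ℓ : E → ℕ)

lemma mulVec_inl (hℓ : ∀ e, 1 ≤ ℓ e) (f : (V ⊕ (Σ e : E, Fin (ℓ e - 1))) → ℂ) (u : V) :
    (subAdj s t ℓ).mulVec f (Sum.inl u) =
      ∑ e : E, (if s e = u then
        (if h1 : ℓ e = 1 then f (Sum.inl (t e))
         else f (Sum.inr ⟨e, ⟨0, by have := hℓ e; omega⟩⟩)) else 0) := by
  simp only [Matrix.mulVec, dotProduct, Fintype.sum_sum_type, subAdj]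
  have h1 : (∑ v : V, ((Finset.univ.filter (fun e => ℓ e = 1 ∧ s e = u ∧ t e = v)).card : ℂ)
        * f (Sum.inl v))
      = ∑ e : E, (if s e = u then (if ℓ e = 1 then f (Sum.inl (t e)) else 0) else 0) := by
    have key : ∀ v : V, ((Finset.univ.filter (fun e => ℓ e = 1 ∧ s e = u ∧ t e = v)).card : ℂ)
        * f (Sum.inl v)
        = ∑ e : E, (if ℓ e = 1 ∧ s e = u then (if t e = v then f (Sum.inl v) else 0) else 0) := by
      intro v
      rw [Finset.natCast_card_filter, Finset.sum_mul]
      apply Finset.sum_congr rfl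
      intro e _
      by_cases hA : ℓ e = 1 <;> by_cases hB : s e = u <;> by_cases hC : t e = v <;>
        simp [hA, hB, hC]
    rw [Finset.sum_congr rfl (fun v _ => key v), Finset.sum_comm]
    apply Finset.sum_congr rfl
    intro e _
    by_cases hA : ℓ e = 1 <;> by_cases hB : s e = u <;>
      simp [hA, hB, Finset.sum_ite_eq' Finset.univ (t e) (fun v => f (Sum.inl v))]
  have h2 : (∑ p : (Σ e : E, Fin (ℓ e - 1)),
        (if s p.1 = u ∧ (p.2 : ℕ) = 0 then (1:ℂ) else 0) * f (Sum.inr p))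
      = ∑ e : E, (if s e = u then
          (if h1 : ℓ e = 1 then 0
           else f (Sum.inr ⟨e, ⟨0, by have := hℓ e; omega⟩⟩)) else 0) := by
    rw [← Finset.univ_sigma_univ, Finset.sum_sigma]
    apply Finset.sum_congr rfl
    intro e _
    have key : ∀ j : Fin (ℓ e - 1),
        (if s e = u ∧ (j : ℕ) = 0 then (1:ℂ) else 0) * f (Sum.inr ⟨e, j⟩)
        = if s e = u then (if (j : ℕ) = 0 then f (Sum.inr ⟨e, j⟩) else 0) else 0 := by
      intro j
      by_cases hA : s e = u <;> by_cases hB : (j : ℕ) = 0 <;> simp [hA, hB]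
    rw [Finset.sum_congr rfl (fun j _ => key j)]
    by_cases hA : s e = u
    · simp only [if_pos hA, fin_sum_ite (fun j => f (Sum.inr ⟨e, j⟩)) (k := 0)]
      by_cases hB : ℓ e = 1
      · rw [dif_neg (by omega), dif_pos hB]
      · rw [dif_pos (by have := hℓ e; omega), dif_neg hB]
    · simp [hA]
  rw [h1, h2, ← Finset.sum_add_distrib]
  apply Finset.sum_congr rfl
  intro e _
  by_cases hA : s e = u <;> by_cases hB : ℓ e = 1 <;> simp [hA, hB]

lemma perron_mulVec (x : ℂ) (g : V → ℂ) (u : V) :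
    (perronMat s t ℓ x).mulVec g u = ∑ e : E, (if s e = u then x ^ ℓ e * g (t e) else 0) := by
  simp only [Matrix.mulVec, dotProduct, perronMat]
  have key : ∀ v : V, (∑ e ∈ Finset.univ.filter (fun e => s e = u ∧ t e = v), x ^ ℓ e) * g v
      = ∑ e : E, (if s e = u then (if t e = v then x ^ ℓ e * g v else 0) else 0) := by
    intro v
    rw [Finset.sum_filter, Finset.sum_mul]
    apply Finset.sum_congr rfl
    intro e _
    by_cases hA : s e = u <;> by_cases hB : t e = v <;> simp [hA, hB]
  rw [Finset.sum_congr rfl (fun v _ => key v), Finset.sum_comm]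
  apply Finset.sum_congr rfl
  intro e _
  by_cases hA : s e = u <;>
    simp [hA, Finset.sum_ite_eq' Finset.univ (t e) (fun v => x ^ ℓ e * g v)]
end Helpers2

section Helpers3
variable {V E : Type} [Fintype V] [DecidableEq V] [Fintype E] [DecidableEq E]
  (s t : E → V) (ℓ : E → ℕ)

lemma mulVec_inl_of_formula (hℓ : ∀ e, 1 ≤ ℓ e) (lam : ℂ)
    (f : (V ⊕ (Σ e : E, Fin (ℓ e - 1))) → ℂ)
    (key : ∀ e (j : Fin (ℓ e - 1)),
      f (Sum.inr ⟨e, j⟩) = lam⁻¹ ^ (ℓ e - 1 - (j : ℕ)) * f (Sum.inl (t e))) (u : V) :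
    (subAdj s t ℓ).mulVec f (Sum.inl u)
      = ∑ e : E, (if s e = u then lam⁻¹ ^ (ℓ e - 1) * f (Sum.inl (t e)) else 0) := by
  rw [mulVec_inl s t ℓ hℓ f u]
  apply Finset.sum_congr rfl
  intro e _
  by_cases hA : s e = u
  · rw [if_pos hA, if_pos hA]
    by_cases hB : ℓ e = 1
    · rw [dif_pos hB, hB]
      simp
    · rw [dif_neg hB, key e ⟨0, by have := hℓ e; omega⟩]
      norm_num
  · simp [hA]
end Helpers3

/-- A nonzero `λ` is an eigenvalue of the adjacency matrix of the subdivided graph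
iff `det(I - A(λ⁻¹)) = 0`. -/

theorem stmt8 (V E : Type) [Fintype V] [DecidableEq V] [Fintype E] [DecidableEq E]
    (s t : E → V) (ℓ : E → ℕ) (hℓ : ∀ e, 1 ≤ ℓ e)
    (lam : ℂ) (hlam : lam ≠ 0) :
    (∃ f : (V ⊕ (Σ e : E, Fin (ℓ e - 1))) → ℂ, f ≠ 0 ∧ (subAdj s t ℓ).mulVec f = lam • f)
      ↔ Matrix.det (1 - perronMat s t ℓ lam⁻¹) = 0 := by
  have hstep : ∀ k : ℕ, lam * (lam⁻¹ ^ (k + 1)) = lam⁻¹ ^ k := by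
    intro k
    rw [pow_succ]
    calc lam * (lam⁻¹ ^ k * lam⁻¹) = lam⁻¹ ^ k * (lam * lam⁻¹) := by ring
    _ = lam⁻¹ ^ k := by rw [mul_inv_cancel₀ hlam, mul_one]
  constructor
  · rintro ⟨f, hf0, hfe⟩
    have heig : ∀ x, (subAdj s t ℓ).mulVec f x = lam * f x := by
      intro x
      rw [hfe]
      simp
    have key : ∀ m (e : E) (j : Fin (ℓ e - 1)), ℓ e - 2 - (j : ℕ) = m →
        f (Sum.inr ⟨e, j⟩) = lam⁻¹ ^ (ℓ e - 1 - (j : ℕ)) * f (Sum.inl (t e)) := by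
      intro m
      induction m with
      | zero =>
        intro e j hj
        have hlt := j.isLt
        have h2 : (j : ℕ) + 2 = ℓ e := by omega
        have heq := heig (Sum.inr ⟨e, j⟩)
        rw [mulVec_inr, if_pos h2, dif_neg (by omega), add_zero] at heq
        have hpow : ℓ e - 1 - (j : ℕ) = 1 := by omega
        rw [hpow, pow_one, heq, inv_mul_cancel_left₀ hlam]
      | succ m ih =>
        intro e j hj
        have hlt := j.isLt
        have h2 : (j : ℕ) + 1 < ℓ e - 1 := by omega
        have heq := heig (Sum.inr ⟨e, j⟩)
        rw [mulVec_inr, if_neg (by omega), dif_pos h2, zero_add] at heq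
        have hih := ih e ⟨(j : ℕ) + 1, h2⟩ (by simp; omega)
        simp only at hih
        have hk : ℓ e - 1 - (j : ℕ) = (ℓ e - 1 - ((j : ℕ) + 1)) + 1 := by omega
        have : f (Sum.inr ⟨e, j⟩) = lam⁻¹ * f (Sum.inr ⟨e, ⟨(j : ℕ) + 1, h2⟩⟩) := by
          rw [heq, inv_mul_cancel_left₀ hlam]
        rw [this, hih, hk, pow_succ]
        ring
    have keyF : ∀ (e : E) (j : Fin (ℓ e - 1)),
        f (Sum.inr ⟨e, j⟩) = lam⁻¹ ^ (ℓ e - 1 - (j : ℕ)) * f (Sum.inl (t e)) :=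
      fun e j => key _ e j rfl
    set g : V → ℂ := fun v => f (Sum.inl v) with hg
    have hg0 : g ≠ 0 := by
      intro hzero
      apply hf0
      funext x
      cases x with
      | inl v => exact congrFun hzero v
      | inr p =>
        obtain ⟨e, j⟩ := p
        rw [keyF e j]
        have : g (t e) = 0 := congrFun hzero (t e)
        show lam⁻¹ ^ (ℓ e - 1 - (j : ℕ)) * g (t e) = 0
        rw [this, mul_zero]
    have hper : (1 - perronMat s t ℓ lam⁻¹).mulVec g = 0 := by
      funext u
      rw [Matrix.sub_mulVec, Matrix.one_mulVec]
      have heq := heig (Sum.inl u)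
      rw [mulVec_inl_of_formula s t ℓ hℓ lam f keyF u] at heq
      have : g u = (perronMat s t ℓ lam⁻¹).mulVec g u := by
        rw [perron_mulVec]
        have : lam⁻¹ * (lam * g u) = g u := inv_mul_cancel_left₀ hlam _
        rw [← this, ← heq, Finset.mul_sum]
        apply Finset.sum_congr rfl
        intro e _
        by_cases hA : s e = u
        · rw [if_pos hA, if_pos hA]
          have he1 : ℓ e = (ℓ e - 1) + 1 := by have := hℓ e; omega
          rw [← mul_assoc]
          congr 1
          conv_rhs => rw [he1]
          rw [pow_succ]
          ring
        · simp [hA]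
      simp [Pi.sub_apply, ← this]
    exact Matrix.exists_mulVec_eq_zero_iff.mp ⟨g, hg0, hper⟩
  · intro hdet
    obtain ⟨g, hg0, hgv⟩ := Matrix.exists_mulVec_eq_zero_iff.mpr hdet
    set f : (V ⊕ (Σ e : E, Fin (ℓ e - 1))) → ℂ :=
      Sum.elim g (fun p => lam⁻¹ ^ (ℓ p.1 - 1 - (p.2 : ℕ)) * g (t p.1)) with hf
    have keyF : ∀ (e : E) (j : Fin (ℓ e - 1)),
        f (Sum.inr ⟨e, j⟩) = lam⁻¹ ^ (ℓ e - 1 - (j : ℕ)) * f (Sum.inl (t e)) :=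
      fun e j => rfl
    refine ⟨f, ?_, ?_⟩
    · intro hzero
      apply hg0
      funext v
      exact congrFun hzero (Sum.inl v)
    · have hgu : ∀ u, g u = ∑ e : E, (if s e = u then lam⁻¹ ^ (ℓ e) * g (t e) else 0) := by
        intro u
        have := congrFun hgv u
        rw [Matrix.sub_mulVec, Matrix.one_mulVec] at this
        have h2 : g u = (perronMat s t ℓ lam⁻¹).mulVec g u := by
          have := congrFun hgv u
          rw [Matrix.sub_mulVec, Matrix.one_mulVec] at this
          simpa [sub_eq_zero] using this
        rw [h2, perron_mulVec]
      funext x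
      cases x with
      | inl u =>
        rw [mulVec_inl_of_formula s t ℓ hℓ lam f keyF u]
        show _ = lam * f (Sum.inl u)
        show _ = lam * g u
        rw [hgu u, Finset.mul_sum]
        apply Finset.sum_congr rfl
        intro e _
        by_cases hA : s e = u
        · rw [if_pos hA, if_pos hA]
          have he1 : ℓ e = (ℓ e - 1) + 1 := by have := hℓ e; omega
          rw [← mul_assoc]
          congr 1
          conv_rhs => rw [he1]
          rw [hstep]
        · simp [hA]
      | inr p =>
        obtain ⟨e, j⟩ := p
        rw [mulVec_inr]
        have hlt := j.isLt
        show _ = lam * f (Sum.inr ⟨e, j⟩)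
        rw [keyF e j]
        by_cases h2 : (j : ℕ) + 2 = ℓ e
        · rw [if_pos h2, dif_neg (by omega), add_zero]
          have hpow : ℓ e - 1 - (j : ℕ) = 1 := by omega
          rw [hpow, pow_one, ← mul_assoc, mul_inv_cancel₀ hlam, one_mul]
        · have h3 : (j : ℕ) + 1 < ℓ e - 1 := by omega
          rw [if_neg h2, dif_pos h3, zero_add, keyF e ⟨(j : ℕ) + 1, h3⟩]
          have hk : ℓ e - 1 - (j : ℕ) = (ℓ e - 1 - ((j : ℕ) + 1)) + 1 := by omega
          rw [hk, ← mul_assoc, hstep]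
end
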